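/- With F constructed as the block-FSAI matrix for A based on the lower triangular pattern 𝒫, for every block row k and every column index j ∈ 𝒫̃_k it holds that (F A)_{kj} = 0, i.e., the off-diagonal blocks of FA vanish on the pattern: 𝒫(FA) ∩ 𝒫 = {(k,k) : k = 1,...,n}. -/

import Mathlib

open Matrix

/-- Scalar index type for a block structure with `n` blocks of sizes `m i`. -/
abbrev BIdx {n : ℕ} (m : Fin n → ℕ) := (i : Fin n) × Fin (m i)

/-- The `(i,j)` block of a block-structured matrix. -/
def blk {n : ℕ} {m : Fin n → ℕ} (A : Matrix (BIdx m) (BIdx m) ℝ) (i j : Fin n) :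
    Matrix (Fin (m i)) (Fin (m j)) ℝ :=
  fun a b => A ⟨i, a⟩ ⟨j, b⟩

/-- The block-diagonal part `diag_𝔅(A)` of a block-structured matrix. -/
def bdiag {n : ℕ} {m : Fin n → ℕ} (A : Matrix (BIdx m) (BIdx m) ℝ) :
    Matrix (BIdx m) (BIdx m) ℝ :=
  fun p q => if p.1 = q.1 then A p q else 0

/-- The block submatrix `A[S, T]` with block-row indices in `S` and block-column indices in `T`. -/
def subM {n : ℕ} {m : Fin n → ℕ} (A : Matrix (BIdx m) (BIdx m) ℝ) (S T : Finset (Fin n)) :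
    Matrix {p : BIdx m // p.1 ∈ S} {q : BIdx m // q.1 ∈ T} ℝ :=
  fun p q => A p.val q.val

/-- The block row submatrix `A[{i}, T]`. -/
def rowM {n : ℕ} {m : Fin n → ℕ} (A : Matrix (BIdx m) (BIdx m) ℝ) (i : Fin n)
    (T : Finset (Fin n)) : Matrix (Fin (m i)) {q : BIdx m // q.1 ∈ T} ℝ :=
  fun a q => A ⟨i, a⟩ q.val

/-- The block column submatrix `A[S, {i}]`. -/
def colM {n : ℕ} {m : Fin n → ℕ} (A : Matrix (BIdx m) (BIdx m) ℝ) (S : Finset (Fin n))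
    (i : Fin n) : Matrix {p : BIdx m // p.1 ∈ S} (Fin (m i)) ℝ :=
  fun p a => A p.val ⟨i, a⟩

/-- A block sparsity pattern, given by its rows `P i ⊆ {1,…,n}`, is lower triangular and
contains the diagonal. -/
def IsLowerPattern {n : ℕ} (P : Fin n → Finset (Fin n)) : Prop :=
  (∀ i, i ∈ P i) ∧ ∀ i j, j ∈ P i → j ≤ i

/-- `F` is the block-FSAI matrix for `A` based on the pattern `P`: identity diagonal blocks,
zero blocks outside the pattern, and `F[{i}, 𝒫̃ᵢ] = -A[{i}, 𝒫̃ᵢ] A[𝒫̃ᵢ, 𝒫̃ᵢ]⁻¹`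
where `𝒫̃ᵢ = Pᵢ \ {i}`. -/
def IsFSAI {n : ℕ} {m : Fin n → ℕ} (A F : Matrix (BIdx m) (BIdx m) ℝ)
    (P : Fin n → Finset (Fin n)) : Prop :=
  (∀ i, blk F i i = 1) ∧
  (∀ p q : BIdx m, p.1 ≠ q.1 → q.1 ∉ P p.1 → F p q = 0) ∧
  (∀ i, rowM F i ((P i).erase i) =
    -(rowM A i ((P i).erase i)) * (subM A ((P i).erase i) ((P i).erase i))⁻¹)

/-- `S` is the block-diagonal FSAI Schur-complement matrix:
`S_{ii} = A_{ii} - A[{i}, 𝒫̃ᵢ] A[𝒫̃ᵢ, 𝒫̃ᵢ]⁻¹ A[𝒫̃ᵢ, {i}]`. -/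
def IsFSAISchur {n : ℕ} {m : Fin n → ℕ} (A S : Matrix (BIdx m) (BIdx m) ℝ)
    (P : Fin n → Finset (Fin n)) : Prop :=
  (∀ p q : BIdx m, p.1 ≠ q.1 → S p q = 0) ∧
  (∀ i, blk S i i =
    blk A i i - rowM A i ((P i).erase i) * (subM A ((P i).erase i) ((P i).erase i))⁻¹ *
      colM A ((P i).erase i) i)


lemma posDef_submatrix_subtype {ι : Type*} [Fintype ι] [DecidableEq ι]
    {A : Matrix ι ι ℝ} (hA : A.PosDef) (pr : ι → Prop) [DecidablePred pr] :
    (A.submatrix (Subtype.val : Subtype pr → ι) Subtype.val).PosDef := by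
  exact hA.submatrix Subtype.val_injective

/-- The off-diagonal blocks of `F A` vanish on the pattern: for every block row `k` and
every `j ∈ 𝒫̃ₖ`, `(F A)_{kj} = 0`, i.e. `𝒫(FA) ∩ 𝒫 ⊆ {(k,k)}`. -/
theorem fsai_prod_vanishes_on_pattern {n : ℕ} {m : Fin n → ℕ}
    (A F : Matrix (BIdx m) (BIdx m) ℝ) (P : Fin n → Finset (Fin n))
    (hA : A.PosDef) (hP : IsLowerPattern P) (hF : IsFSAI A F P) :
    ∀ k j : Fin n, j ≠ k → j ∈ P k → blk (F * A) k j = 0 := by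

  intro k j hjk hjP
  classical
  set T : Finset (Fin n) := (P k).erase k with hT
  have hjT : j ∈ T := Finset.mem_erase.mpr ⟨hjk, hjP⟩
  have hkT : k ∉ T := fun h => (Finset.mem_erase.mp h).1 rfl
  set M := subM A T T with hMdef
  have hMeq : M = A.submatrix (Subtype.val : {p : BIdx m // p.1 ∈ T} → BIdx m) Subtype.val := rfl
  have hMpd : M.PosDef := hMeq ▸ posDef_submatrix_subtype hA _
  have hinv : M⁻¹ * M = 1 :=
    Matrix.nonsing_inv_mul M (isUnit_iff_ne_zero.mpr hMpd.det_pos.ne')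
  have hrowF := hF.2.2 k
  rw [← hT] at hrowF
  have hrow : rowM F k T * M = -(rowM A k T) := by
    rw [hrowF, Matrix.mul_assoc, hinv, Matrix.mul_one]
  ext a b
  show (F * A) ⟨k, a⟩ ⟨j, b⟩ = 0
  rw [Matrix.mul_apply]
  set g : BIdx m → ℝ := fun p => F ⟨k, a⟩ p * A p ⟨j, b⟩ with hg
  have hsub : ∀ p : BIdx m, g p ≠ 0 → p ∈ (insert k T).sigma (fun _ => Finset.univ) := by
    intro p hp
    rw [Finset.mem_sigma]
    refine ⟨?_, Finset.mem_univ _⟩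
    by_contra h
    simp only [Finset.mem_insert, not_or] at h
    have hne : (⟨k, a⟩ : BIdx m).1 ≠ p.1 := fun hh => h.1 hh.symm
    have hnotP : p.1 ∉ P (⟨k, a⟩ : BIdx m).1 := by
      intro hmem
      exact h.2 (hT ▸ Finset.mem_erase.mpr ⟨fun hh => h.1 hh, hmem⟩)
    exact hp (by simp [hg, hF.2.1 ⟨k, a⟩ p hne hnotP])
  have e0 : ∑ p, g p = ∑ p ∈ (insert k T).sigma (fun _ => Finset.univ), g p :=
    (Finset.sum_subset (Finset.subset_univ _)
      (fun p _ hp => by by_contra h; exact hp (hsub p h))).symm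
  have hd : ∑ c, g ⟨k, c⟩ = A ⟨k, a⟩ ⟨j, b⟩ := by
    have h1 : ∀ c, F ⟨k, a⟩ ⟨k, c⟩ = if a = c then 1 else 0 := fun c => by
      have := congrFun (congrFun (hF.1 k) a) c
      simpa [blk, Matrix.one_apply] using this
    simp [hg, h1, ite_mul]
  have ho : ∑ l ∈ T, ∑ c, g ⟨l, c⟩ = -(A ⟨k, a⟩ ⟨j, b⟩) := by
    rw [← Finset.sum_sigma T (fun _ => Finset.univ) g,
      Finset.sum_subtype (p := fun p : BIdx m => p.1 ∈ T)
        (T.sigma fun _ => Finset.univ) (by simp [Finset.mem_sigma]) g]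
    have e1 : ∑ p : {p : BIdx m // p.1 ∈ T}, g p.val
        = (rowM F k T * M) a ⟨⟨j, b⟩, hjT⟩ := by
      rw [Matrix.mul_apply]; rfl
    rw [e1, hrow]
    simp [rowM]
  rw [e0, Finset.sum_sigma, Finset.sum_insert hkT, hd, ho, add_neg_cancel]
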